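/- arXiv:1508.02273 — 3 statements merged into one kernel-verified Lean document; each statement's English description precedes it below -/
import Mathlib

section
/- A non-empty operation sequence w with decomposition w = x₁w₁⋯w_{2m-1}x_{2m}v (x₁⋯x_{2m} unbreakable, wᵢ tsip words, v an operation sequence) is canonical if and only if: (i) x₁x₂⋯x_{2m} is top happy; (ii) each wᵢ is a standard tsip word that outputs eagerly; (iii) v is canonical; (iv) whenever xᵢxᵢ₊₁ equals I₁O₂ or I₂O₁, the word wᵢ is non-empty. -/
/-- The four deque operations: input to the top/bottom, output from the top/bottom. -/
inductive Letter : Type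
  | I1 | I2 | O1 | O2
  deriving DecidableEq, Repr

open Letter

/-- Whether a letter is an input operation. -/
def Letter.isI : Letter → Bool
  | I1 => true | I2 => true | O1 => false | O2 => false

/-- Number of input letters in a word. -/
def countI (w : List Letter) : ℕ := (w.filter Letter.isI).length

/-- Number of output letters in a word. -/
def countO (w : List Letter) : ℕ := (w.filter fun x => !x.isI).length

/-- An operation sequence: equally many inputs and outputs, and every prefix has at
least as many inputs as outputs. -/
def IsOpSeq (w : List Letter) : Prop :=
  countI w = countO w ∧ ∀ m : ℕ, countO (w.take m) ≤ countI (w.take m)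

/-- A tsip word: for each end `j ∈ {1,2}` of the deque, the number of `Iⱼ` equals the
number of `Oⱼ`, and every prefix contains at least as many `Iⱼ` as `Oⱼ`. -/
def IsTsip (w : List Letter) : Prop :=
  (w.count I1 = w.count O1) ∧ (w.count I2 = w.count O2) ∧
    ∀ m : ℕ, (w.take m).count O1 ≤ (w.take m).count I1 ∧
      (w.take m).count O2 ≤ (w.take m).count I2

/-- A word outputs eagerly if it contains no consecutive sub-word `I₁O₂` or `I₂O₁`. -/
def OutputsEagerly (w : List Letter) : Prop :=
  ¬ [I1, O2] <:+: w ∧ ¬ [I2, O1] <:+: w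

/-- A word is standard if every non-empty tsip sub-word begins with `I₁`. -/
def Standard (w : List Letter) : Prop :=
  ∀ u : List Letter, u <:+: w → IsTsip u → u ≠ [] → u.head? = some I1

/-- A word is top happy if `I₂` and `O₂` occur only when the number of preceding inputs
exceeds the number of preceding outputs by at least two (i.e. the deque holds at least
two items). -/
def TopHappy (w : List Letter) : Prop :=
  ∀ u v : List Letter, ∀ x : Letter, w = u ++ x :: v → (x = I2 ∨ x = O2) →
    countO u + 2 ≤ countI u

/-- A canonical operation sequence: outputs eagerly, standard and top happy. -/
def Canonical (w : List Letter) : Prop :=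
  OutputsEagerly w ∧ Standard w ∧ TopHappy w

/-- The state of a deque machine: the remaining input, the deque contents (top first),
and the output produced so far. -/
structure DequeState : Type where
  inp : List ℕ
  dq : List ℕ
  out : List ℕ
  deriving DecidableEq, Repr

/-- Apply a single operation to a deque state, if possible. -/
def applyOp : Letter → DequeState → Option DequeState
  | I1, ⟨a :: r, d, o⟩ => some ⟨r, a :: d, o⟩
  | I2, ⟨a :: r, d, o⟩ => some ⟨r, d ++ [a], o⟩
  | O1, ⟨r, a :: d, o⟩ => some ⟨r, d, o ++ [a]⟩
  | O2, ⟨r, d, o⟩ =>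
      match d.getLast? with
      | some a => some ⟨r, d.dropLast, o ++ [a]⟩
      | none => none
  | I1, ⟨[], _, _⟩ => none
  | I2, ⟨[], _, _⟩ => none
  | O1, ⟨_, [], _⟩ => none

/-- Run a word of operations on a deque state. -/
def runOps : List Letter → DequeState → Option DequeState
  | [], s => some s
  | x :: w, s => (applyOp x s).bind (runOps w)

/-- `w` produces the permutation (given as the list `l`): applying `w` to the identity
input `0, 1, …, l.length - 1` empties the input and the deque with output exactly `l`. -/
def Produces (w : List Letter) (l : List ℕ) : Prop :=
  runOps w ⟨List.range l.length, [], []⟩ = some ⟨[], [], l⟩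

/-- A list is deque-achievable if it is a permutation of `0, …, n-1` produced by some
operation sequence. -/
def DequeAchievable (l : List ℕ) : Prop := ∃ w : List Letter, Produces w l

/-- An unbreakable operation sequence: non-empty, contains no tsip sub-word other than
possibly itself or the empty word, and no proper non-empty prefix is an operation
sequence (the deque is never empty strictly inside the sequence). -/
def IsUnbreakable (s : List Letter) : Prop :=
  IsOpSeq s ∧ s ≠ [] ∧
    (∀ u : List Letter, u <:+: s → IsTsip u → u = [] ∨ u = s) ∧
    ∀ p : List Letter, p <+: s → IsOpSeq p → p = [] ∨ p = s

/-- `IsDecomp w xs ws v` asserts that `w = x₁w₁x₂w₂⋯x_{2m-1}w_{2m-1}x_{2m}v`, where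
`xs = [x₁,…,x_{2m}]` with `m ≥ 1` forms an unbreakable operation sequence, each `wᵢ` in
`ws = [w₁,…,w_{2m-1}]` is a (possibly empty) tsip word, and `v` is an operation
sequence. -/
def IsDecomp (w : List Letter) (xs : List Letter) (ws : List (List Letter))
    (v : List Letter) : Prop :=
  (∃ m : ℕ, 0 < m ∧ xs.length = 2 * m) ∧
    xs.length = ws.length + 1 ∧
    IsUnbreakable xs ∧
    (∀ wi ∈ ws, IsTsip wi) ∧
    IsOpSeq v ∧
    w = (List.zipWith (fun x wi => x :: wi) xs (ws ++ [[]])).flatten ++ v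

instance : Inhabited Letter := ⟨I1⟩

/-! ### integer-valued difference counts -/

def d1 (l : List Letter) : ℤ := (l.count I1 : ℤ) - l.count O1
def d2 (l : List Letter) : ℤ := (l.count I2 : ℤ) - l.count O2
def dt (l : List Letter) : ℤ := (countI l : ℤ) - countO l

lemma countI_eq (l : List Letter) : countI l = l.count I1 + l.count I2 := by
  induction l with
  | nil => rfl
  | cons a l ih =>
    cases a <;> simp [countI, List.filter, Letter.isI, List.count_cons] at * <;> omega

lemma countO_eq (l : List Letter) : countO l = l.count O1 + l.count O2 := by
  induction l with
  | nil => rfl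
  | cons a l ih =>
    cases a <;> simp [countO, List.filter, Letter.isI, List.count_cons] at * <;> omega

lemma dt_eq_d (l : List Letter) : dt l = d1 l + d2 l := by
  simp [dt, d1, d2, countI_eq, countO_eq]; push_cast; ring

lemma d1_append (a b : List Letter) : d1 (a ++ b) = d1 a + d1 b := by
  simp [d1, List.count_append]; push_cast; ring

lemma d2_append (a b : List Letter) : d2 (a ++ b) = d2 a + d2 b := by
  simp [d2, List.count_append]; push_cast; ring

lemma dt_append (a b : List Letter) : dt (a ++ b) = dt a + dt b := by
  simp [dt_eq_d, d1_append, d2_append]; ring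

lemma countIO_of_dt {l : List Letter} (h : 2 ≤ dt l) : countO l + 2 ≤ countI l := by
  simp [dt] at h; omega

lemma dt_of_countIO {l : List Letter} (h : countO l + 2 ≤ countI l) : 2 ≤ dt l := by
  simp [dt]; omega

/-! ### prefix reformulations -/

lemma prefix_eq_take {α : Type*} {p l : List α} (h : p <+: l) : p = l.take p.length :=
  List.prefix_iff_eq_take.1 h

lemma isTsip_iff {w : List Letter} :
    IsTsip w ↔ d1 w = 0 ∧ d2 w = 0 ∧ ∀ p, p <+: w → 0 ≤ d1 p ∧ 0 ≤ d2 p := by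
  constructor
  · rintro ⟨h1, h2, h3⟩
    refine ⟨by simp [d1, h1], by simp [d2, h2], fun p hp => ?_⟩
    rw [prefix_eq_take hp]
    have := h3 p.length
    constructor <;> simp [d1, d2] <;> omega
  · rintro ⟨h1, h2, h3⟩
    refine ⟨?_, ?_, fun m => ?_⟩
    · simp [d1] at h1; omega
    · simp [d2] at h2; omega
    · have := h3 (w.take m) (List.take_prefix m w)
      simp [d1, d2] at this; omega

lemma isOpSeq_iff {w : List Letter} :
    IsOpSeq w ↔ dt w = 0 ∧ ∀ p, p <+: w → 0 ≤ dt p := by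
  constructor
  · rintro ⟨h1, h2⟩
    refine ⟨by simp [dt, h1], fun p hp => ?_⟩
    rw [prefix_eq_take hp]
    have := h2 p.length
    simp [dt]; omega
  · rintro ⟨h1, h2⟩
    refine ⟨?_, fun m => ?_⟩
    · simp [dt] at h1; omega
    · have := h2 (w.take m) (List.take_prefix m w)
      simp [dt] at this; omega

lemma IsTsip.d1_eq {w : List Letter} (h : IsTsip w) : d1 w = 0 := (isTsip_iff.1 h).1
lemma IsTsip.d2_eq {w : List Letter} (h : IsTsip w) : d2 w = 0 := (isTsip_iff.1 h).2.1
lemma IsTsip.dt_eq {w : List Letter} (h : IsTsip w) : dt w = 0 := by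
  rw [dt_eq_d, h.d1_eq, h.d2_eq]; ring
lemma IsTsip.prefix_le {w p : List Letter} (h : IsTsip w) (hp : p <+: w) :
    0 ≤ d1 p ∧ 0 ≤ d2 p := (isTsip_iff.1 h).2.2 p hp
lemma IsTsip.suffix_le {w p : List Letter} (h : IsTsip w) (hp : p <:+ w) :
    d1 p ≤ 0 ∧ d2 p ≤ 0 := by
  obtain ⟨a, rfl⟩ := hp
  have h1 := h.d1_eq; have h2 := h.d2_eq
  have := h.prefix_le (List.prefix_append a p)
  rw [d1_append] at h1; rw [d2_append] at h2
  omega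

/-- dropping a balanced prefix of a tsip word gives a tsip word -/
lemma IsTsip.drop_balanced {p s : List Letter} (h : IsTsip (p ++ s))
    (h1 : d1 p = 0) (h2 : d2 p = 0) : IsTsip s := by
  rw [isTsip_iff] at h ⊢
  obtain ⟨e1, e2, hpre⟩ := h
  rw [d1_append, h1] at e1
  rw [d2_append, h2] at e2
  refine ⟨by omega, by omega, fun q hq => ?_⟩
  have := hpre (p ++ q) ((List.prefix_append_right_inj p).2 hq)
  rw [d1_append, d2_append, h1, h2] at this
  omega

/-- a balanced prefix of a tsip word is tsip -/
lemma IsTsip.prefix_balanced {p s : List Letter} (h : IsTsip (p ++ s))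
    (h1 : d1 p = 0) (h2 : d2 p = 0) : IsTsip p := by
  rw [isTsip_iff] at h ⊢
  exact ⟨h1, h2, fun q hq => h.2.2 q (hq.trans (List.prefix_append p s))⟩

/-- head of a nonempty tsip word is an input -/
lemma d1_single : ∀ x : Letter, d1 [x] = if x = I1 then 1 else if x = O1 then -1 else 0 := by
  intro x; cases x <;> simp [d1]

lemma d2_single : ∀ x : Letter, d2 [x] = if x = I2 then 1 else if x = O2 then -1 else 0 := by
  intro x; cases x <;> simp [d2]

lemma dt_single : ∀ x : Letter, dt [x] = if x = I1 ∨ x = I2 then 1 else -1 := by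
  intro x; cases x <;> simp [dt, countI, countO, List.filter, Letter.isI]

lemma IsTsip.head_isI {x : Letter} {t : List Letter} (h : IsTsip (x :: t)) :
    x = I1 ∨ x = I2 := by
  have h' : IsTsip ([x] ++ t) := h
  have := h'.prefix_le (List.prefix_append [x] t)
  have e1 := d1_single x; have e2 := d2_single x
  cases x
  · exact Or.inl rfl
  · exact Or.inr rfl
  · exfalso; simp at e1 e2; omega
  · exfalso; simp at e1 e2; omega

/-- last of a nonempty tsip word is an output -/
lemma IsTsip.last_isO {x : Letter} {t : List Letter} (h : IsTsip (t ++ [x])) :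
    x = O1 ∨ x = O2 := by
  have := h.suffix_le ⟨t, rfl⟩
  have e1 := d1_single x; have e2 := d2_single x
  cases x
  · exfalso; simp at e1 e2; omega
  · exfalso; simp at e1 e2; omega
  · exact Or.inl rfl
  · exact Or.inr rfl

lemma IsOpSeq.dt_eq {w : List Letter} (h : IsOpSeq w) : dt w = 0 := (isOpSeq_iff.1 h).1
lemma IsOpSeq.prefix_le {w p : List Letter} (h : IsOpSeq w) (hp : p <+: w) : 0 ≤ dt p :=
  (isOpSeq_iff.1 h).2 p hp

/-- last of a nonempty opseq is an output -/
lemma IsOpSeq.last_isO {x : Letter} {t : List Letter} (h : IsOpSeq (t ++ [x])) :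
    x = O1 ∨ x = O2 := by
  have h0 := h.dt_eq
  have h1 := h.prefix_le (List.prefix_append t [x])
  rw [dt_append] at h0
  have e := dt_single x
  cases x
  · exfalso; simp at e; omega
  · exfalso; simp at e; omega
  · exact Or.inl rfl
  · exact Or.inr rfl

section ListLemmas
variable {α : Type*}

lemma infix_append_cases {u a b : List α} (h : u <:+: a ++ b) :
    u <:+: a ∨ u <:+: b ∨
      ∃ u1 u2, u = u1 ++ u2 ∧ u1 ≠ [] ∧ u2 ≠ [] ∧ u1 <:+ a ∧ u2 <+: b := by
  obtain ⟨s, t, hst⟩ := h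
  rw [List.append_assoc] at hst
  rcases List.append_eq_append_iff.1 hst with ⟨e, he1, he2⟩ | ⟨e, he1, he2⟩
  · -- a = s ++ e, u ++ t = e ++ b
    rcases List.append_eq_append_iff.1 he2 with ⟨f, hf1, hf2⟩ | ⟨f, hf1, hf2⟩
    · -- e = u ++ f, t = f ++ b : u inside a
      exact Or.inl ⟨s, f, by rw [he1, hf1]; simp⟩
    · -- u = e ++ f, b = f ++ t
      rcases eq_or_ne e [] with rfl | hee
      · refine Or.inr (Or.inl ⟨[], t, ?_⟩)
        simp only [List.nil_append] at hf1
        rw [hf2, ← hf1]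
        simp
      rcases eq_or_ne f [] with rfl | hfe
      · refine Or.inl ⟨s, [], ?_⟩
        rw [he1]
        simp [hf1]
      · exact Or.inr (Or.inr ⟨e, f, hf1, hee, hfe, ⟨s, he1.symm⟩, ⟨t, hf2.symm⟩⟩)
  · -- s = a ++ e, b = e ++ (u ++ t)
    exact Or.inr (Or.inl ⟨e, t, by rw [he2]; simp⟩)

lemma prefix_flatten {cs : List (List α)} {q : List α} (hne : ∀ c ∈ cs, c ≠ [])
    (hq : q <+: cs.flatten) (hqne : q ≠ []) :
    ∃ l₁ d l₂ q', cs = l₁ ++ d :: l₂ ∧ q = l₁.flatten ++ q' ∧ q' <+: d ∧ q' ≠ [] := by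
  induction cs generalizing q with
  | nil => simp at hq; exact absurd hq hqne
  | cons c cs ih =>
    obtain ⟨t, ht⟩ := hq
    rw [List.flatten_cons, List.append_eq_append_iff] at ht
    rcases ht with ⟨e, he1, _⟩ | ⟨e, he1, he2⟩
    · exact ⟨[], c, cs, q, rfl, by simp, ⟨e, he1.symm⟩, hqne⟩
    · rcases eq_or_ne e [] with rfl | hee
      · exact ⟨[], c, cs, q, rfl, by simp, by simp [he1], hqne⟩
      · obtain ⟨l₁, d, l₂, q', h1, h2, h3, h4⟩ :=
          ih (fun c hc => hne c (List.mem_cons_of_mem _ hc)) ⟨t, he2.symm⟩ hee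
        exact ⟨c :: l₁, d, l₂, q', by simp [h1], by rw [he1, h2]; simp, h3, h4⟩

lemma suffix_flatten {cs : List (List α)} {p : List α}
    (hp : p <:+ cs.flatten) (hpne : p ≠ []) :
    ∃ l₁ c l₂ p', cs = l₁ ++ c :: l₂ ∧ p = p' ++ l₂.flatten ∧ p' <:+ c ∧ p' ≠ [] := by
  induction cs generalizing p with
  | nil => simp at hp; exact absurd hp hpne
  | cons c cs ih =>
    obtain ⟨s, hs⟩ := hp
    rw [List.flatten_cons, List.append_eq_append_iff] at hs
    rcases hs with ⟨e, he1, he2⟩ | ⟨e, he1, he2⟩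
    · rcases eq_or_ne e [] with rfl | hee
      · simp only [List.nil_append] at he2
        have hsuf : p <:+ cs.flatten := by simp [he2]
        obtain ⟨l₁, c', l₂, p', h1, h2, h3, h4⟩ := ih hsuf hpne
        exact ⟨c :: l₁, c', l₂, p', by simp [h1], h2, h3, h4⟩
      · refine ⟨[], c, cs, e, rfl, he2, ⟨s, he1.symm⟩, hee⟩
    · obtain ⟨l₁, c', l₂, p', h1, h2, h3, h4⟩ := ih ⟨e, he2.symm⟩ hpne
      exact ⟨c :: l₁, c', l₂, p', by simp [h1], h2, h3, h4⟩

lemma infix_flatten {cs : List (List α)} {u : List α} (hne : ∀ c ∈ cs, c ≠ [])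
    (hu : u <:+: cs.flatten) (hune : u ≠ []) :
    (∃ l₁ c l₂, cs = l₁ ++ c :: l₂ ∧ u <:+: c) ∨
      (∃ l₁ c mid d l₂ p q, cs = l₁ ++ c :: (mid ++ d :: l₂) ∧
        u = p ++ mid.flatten ++ q ∧ p <:+ c ∧ p ≠ [] ∧ q <+: d ∧ q ≠ []) := by
  induction cs generalizing u with
  | nil => simp at hu; exact absurd hu hune
  | cons c cs ih =>
    rw [List.flatten_cons] at hu
    rcases infix_append_cases hu with h | h | ⟨u1, u2, rfl, h1, h2, h3, h4⟩
    · exact Or.inl ⟨[], c, cs, rfl, h⟩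
    · rcases ih (fun c hc => hne c (List.mem_cons_of_mem _ hc)) h hune with
        ⟨l₁, c', l₂, h1, h2⟩ | ⟨l₁, c', mid, d, l₂, p, q, h1, h2, h3, h4, h5, h6⟩
      · exact Or.inl ⟨c :: l₁, c', l₂, by simp [h1], h2⟩
      · exact Or.inr ⟨c :: l₁, c', mid, d, l₂, p, q, by simp [h1], h2, h3, h4, h5, h6⟩
    · obtain ⟨l₁, d, l₂, q', hh1, hh2, hh3, hh4⟩ :=
        prefix_flatten (fun c hc => hne c (List.mem_cons_of_mem _ hc)) h4 h2
      exact Or.inr ⟨[], c, l₁, d, l₂, u1, q', by simp [hh1], by rw [hh2, List.append_assoc],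
        h3, h1, hh3, hh4⟩

lemma flatten_eq_append_cons {cs : List (List α)} {u t : List α} {x : α}
    (h : cs.flatten = u ++ x :: t) :
    ∃ l₁ c l₂ r s, cs = l₁ ++ c :: l₂ ∧ c = r ++ x :: s ∧ u = l₁.flatten ++ r := by
  induction cs generalizing u with
  | nil => simp at h
  | cons c cs ih =>
    rw [List.flatten_cons] at h
    rcases List.append_eq_append_iff.1 h with ⟨e, he1, he2⟩ | ⟨e, he1, he2⟩
    · obtain ⟨l₁, c', l₂, r, s, h1, h2, h3⟩ := ih he2
      exact ⟨c :: l₁, c', l₂, r, s, by simp [h1], h2, by rw [he1, h3]; simp⟩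
    · cases e with
      | nil =>
        simp only [List.append_nil] at he1
        simp only [List.nil_append] at he2
        have he2' : cs.flatten = [] ++ x :: t := by rw [← he2]; rfl
        obtain ⟨l₁, c', l₂, r, s, h1, h2, h3⟩ := ih he2'
        refine ⟨c :: l₁, c', l₂, r, s, by simp [h1], h2, ?_⟩
        have h3' : l₁.flatten ++ r = [] := h3.symm
        simp only [List.append_eq_nil_iff] at h3'
        simp [he1, h3'.1, h3'.2]
      | cons y e' =>
        obtain ⟨rfl, rfl⟩ : y = x ∧ t = e' ++ cs.flatten := by
          constructor <;> injection he2 <;> simp_all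
        exact ⟨[], c, cs, u, e', rfl, he1, by simp⟩

lemma prefix_cons_cases {x : α} {w q : List α} (h : q <+: x :: w) :
    q = [] ∨ ∃ q', q = x :: q' ∧ q' <+: w := by
  cases q with
  | nil => exact Or.inl rfl
  | cons y q' =>
    obtain ⟨t, ht⟩ := h
    injection ht with h1 h2
    exact Or.inr ⟨q', by simp [h1], ⟨t, h2⟩⟩

lemma suffix_cons_cases {x : α} {w p : List α} (h : p <:+ x :: w) :
    p = x :: w ∨ p <:+ w := by
  obtain ⟨s, hs⟩ := h
  cases s with
  | nil => exact Or.inl (by simpa using hs)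
  | cons y s' => exact Or.inr ⟨s', by injection hs⟩

end ListLemmas
/-! ### cells machinery -/

lemma d1_nil : d1 ([] : List Letter) = 0 := by simp [d1]
lemma d2_nil : d2 ([] : List Letter) = 0 := by simp [d2]
lemma dt_nil : dt ([] : List Letter) = 0 := by simp [dt, countI, countO]

lemma isTsip_nil : IsTsip ([] : List Letter) := ⟨rfl, rfl, fun m => by simp⟩

lemma d1_cons (x : Letter) (l : List Letter) : d1 (x :: l) = d1 [x] + d1 l :=
  d1_append [x] l
lemma d2_cons (x : Letter) (l : List Letter) : d2 (x :: l) = d2 [x] + d2 l :=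
  d2_append [x] l
lemma dt_cons (x : Letter) (l : List Letter) : dt (x :: l) = dt [x] + dt l :=
  dt_append [x] l

def CellsProp (cs : List (List Letter)) : Prop := ∀ c ∈ cs, c ≠ [] ∧ IsTsip c.tail

lemma CellsProp.of_subset {cs cs' : List (List Letter)} (h : CellsProp cs)
    (hs : cs' ⊆ cs) : CellsProp cs' := fun c hc => h c (hs hc)

lemma d12_flatten_cells {cs : List (List Letter)} (h : CellsProp cs) :
    d1 cs.flatten = d1 (cs.map List.headI) ∧ d2 cs.flatten = d2 (cs.map List.headI) := by
  induction cs with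
  | nil => simp
  | cons c cs ih =>
    obtain ⟨hne, hts⟩ := h c (List.mem_cons_self)
    obtain ⟨x, wc, rfl⟩ := List.exists_cons_of_ne_nil hne
    have ihc := ih (fun c hc => h c (List.mem_cons_of_mem _ hc))
    simp only [List.flatten_cons, List.map_cons, List.headI]
    rw [d1_append, d2_append, d1_cons, d2_cons, d1_cons x (List.map _ cs),
      d2_cons x (List.map _ cs)]
    have e1 : d1 wc = 0 := hts.d1_eq
    have e2 : d2 wc = 0 := hts.d2_eq
    omega

lemma d1_flatten_cells {cs : List (List Letter)} (h : CellsProp cs) :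
    d1 cs.flatten = d1 (cs.map List.headI) := (d12_flatten_cells h).1
lemma d2_flatten_cells {cs : List (List Letter)} (h : CellsProp cs) :
    d2 cs.flatten = d2 (cs.map List.headI) := (d12_flatten_cells h).2
lemma dt_flatten_cells {cs : List (List Letter)} (h : CellsProp cs) :
    dt cs.flatten = dt (cs.map List.headI) := by
  rw [dt_eq_d, dt_eq_d, d1_flatten_cells h, d2_flatten_cells h]

lemma zip_map_headI : ∀ {xs : List Letter} {ws' : List (List Letter)},
    xs.length = ws'.length →
    (List.zipWith (fun x wi => x :: wi) xs ws').map List.headI = xs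
  | [], [], _ => rfl
  | [], _ :: _, h => by simp at h
  | _ :: _, [], h => by simp at h
  | x :: xs, w :: ws', h => by
    simp only [List.zipWith_cons_cons, List.map_cons, List.headI]
    rw [zip_map_headI (by simpa using h)]

lemma zip_map_tail : ∀ {xs : List Letter} {ws' : List (List Letter)},
    xs.length = ws'.length →
    (List.zipWith (fun x wi => x :: wi) xs ws').map List.tail = ws'
  | [], [], _ => rfl
  | [], _ :: _, h => by simp at h
  | _ :: _, [], h => by simp at h
  | x :: xs, w :: ws', h => by
    simp only [List.zipWith_cons_cons, List.map_cons, List.tail_cons]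
    rw [zip_map_tail (by simpa using h)]

lemma zip_cellsProp : ∀ {xs : List Letter} {ws' : List (List Letter)},
    (∀ w ∈ ws', IsTsip w) →
    CellsProp (List.zipWith (fun x wi => x :: wi) xs ws')
  | [], _, _ => by intro c hc; simp at hc
  | _ :: _, [], _ => by intro c hc; simp at hc
  | x :: xs, w :: ws', h => by
    intro c hc
    simp only [List.zipWith_cons_cons] at hc
    rcases List.mem_cons.1 hc with rfl | hc
    · exact ⟨by simp, by simpa using h w (List.mem_cons_self)⟩
    · exact zip_cellsProp (fun w hw => h w (List.mem_cons_of_mem _ hw)) c hc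

lemma get?_split {α : Type*} {l : List α} {i : ℕ} {c : α} (h : l[i]? = some c) :
    ∃ l₁ l₂, l = l₁ ++ c :: l₂ ∧ l₁.length = i := by
  induction l generalizing i with
  | nil => simp at h
  | cons a l ih =>
    cases i with
    | zero => simp at h; exact ⟨[], l, by simp [h], rfl⟩
    | succ i =>
      obtain ⟨l₁, l₂, h1, h2⟩ := ih (by simpa using h)
      exact ⟨a :: l₁, l₂, by rw [h1]; rfl, by simp [h2]⟩

lemma head?_of_prefix {α : Type*} {u l : List α} (h : u <+: l) (hne : u ≠ []) :
    u.head? = l.head? := by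
  obtain ⟨t, rfl⟩ := h
  cases u with
  | nil => exact absurd rfl hne
  | cons a u => rfl

lemma flatten_take_prefix {α : Type*} (C : List (List α)) (i : ℕ) :
    (C.take i).flatten <+: C.flatten := by
  conv_rhs => rw [← List.take_append_drop i C]
  rw [List.flatten_append]
  exact List.prefix_append _ _

lemma prefix_append_singleton {α : Type*} {p l : List α} {y : α}
    (h : p <+: l ++ [y]) : p <+: l ∨ p = l ++ [y] := by
  rcases Nat.lt_or_ge p.length (l ++ [y]).length with hl | hl
  · left
    have hp := prefix_eq_take h
    simp only [List.length_append, List.length_singleton] at hl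
    rw [List.take_append, show p.length - l.length = 0 from by omega,
      List.take_zero, List.append_nil] at hp
    rw [hp]
    exact List.take_prefix _ _
  · right
    have hp := prefix_eq_take h
    rw [List.take_of_length_le hl] at hp
    exact hp

lemma flatten_eq_nil_cells {α : Type*} {cs : List (List α)} (h : ∀ c ∈ cs, c ≠ [])
    (hf : cs.flatten = []) : cs = [] := by
  cases cs with
  | nil => rfl
  | cons c cs =>
    simp only [List.flatten_cons, List.append_eq_nil_iff] at hf
    exact absurd hf.1 (h c (List.mem_cons_self))

lemma standard_infix {w y : List Letter} (h : Standard w) (hy : y <:+: w) : Standard y :=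
  fun u hu => h u (hu.trans hy)

lemma eager_infix {w y : List Letter} (h : OutputsEagerly w) (hy : y <:+: w) :
    OutputsEagerly y :=
  ⟨fun hc => h.1 (hc.trans hy), fun hc => h.2 (hc.trans hy)⟩

lemma infix_cons_cases {α : Type*} {u l : List α} {x : α} (h : u <:+: x :: l) :
    (∃ q, u = x :: q ∧ q <+: l) ∨ u = [] ∨ u <:+: l := by
  obtain ⟨s, t, hst⟩ := h
  cases s with
  | nil =>
    rcases prefix_cons_cases (⟨t, by simpa using hst⟩ : u <+: x :: l) with h | ⟨q, h1, h2⟩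
    · exact Or.inr (Or.inl h)
    · exact Or.inl ⟨q, h1, h2⟩
  | cons y s' =>
    injection hst with h1 h2
    exact Or.inr (Or.inr ⟨s', t, h2⟩)

/-- a tsip word cannot consist of a single letter followed by a part with
nonnegative differences -/
lemma single_marker {x : Letter} {q : List Letter} (h : IsTsip (x :: q))
    (h1 : 0 ≤ d1 q) (h2 : 0 ≤ d2 q) : False := by
  have hx := h.head_isI
  have e1 := h.d1_eq
  have e2 := h.d2_eq
  rw [d1_cons] at e1
  rw [d2_cons] at e2
  have g1 := d1_single x
  have g2 := d2_single x
  rcases hx with rfl | rfl <;> simp at g1 g2 <;> omega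
/-! ### the crux: locating tsip infixes -/

lemma P_balanced {P u wc : List Letter} (hu : IsTsip u) (hP : P <+: u)
    (hs : P <:+ wc) (hw : IsTsip wc) : d1 P = 0 ∧ d2 P = 0 := by
  have h1 := hu.prefix_le hP
  have h2 := hw.suffix_le hs
  omega

lemma seg_prefix_nonneg {C : List (List Letter)} {u P rest : List Letter}
    (hC : CellsProp C) (hu : IsTsip u) (hPd : d1 P = 0 ∧ d2 P = 0)
    (hueq : u = P ++ C.flatten ++ rest) :
    ∀ p, p <+: C.map List.headI → 0 ≤ d1 p ∧ 0 ≤ d2 p := by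
  intro p hp
  have hpt : p = (C.take p.length).map List.headI := by
    have h := prefix_eq_take hp
    rw [← List.map_take] at h
    exact h
  have hCt : CellsProp (C.take p.length) := hC.of_subset (List.take_subset _ _)
  have hd1 : d1 p = d1 (C.take p.length).flatten := by
    conv_lhs => rw [hpt]
    exact (d1_flatten_cells hCt).symm
  have hd2 : d2 p = d2 (C.take p.length).flatten := by
    conv_lhs => rw [hpt]
    exact (d2_flatten_cells hCt).symm
  have hpre : P ++ (C.take p.length).flatten <+: u := by
    rw [hueq, List.append_assoc]
    refine (List.prefix_append_right_inj P).2 ?_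
    exact (flatten_take_prefix C p.length).trans (List.prefix_append _ _)
  have := hu.prefix_le hpre
  rw [d1_append, d2_append, hPd.1, hPd.2] at this
  omega

lemma spanning_case {cs C L1 l₂ : List (List Letter)} {u P q'' wd : List Letter}
    {y : Letter}
    (hcs : CellsProp cs)
    (htsip : ∀ t, t <:+: cs.map List.headI → IsTsip t → t = [] ∨ t = cs.map List.headI)
    (hcseq : cs = (L1 ++ C) ++ (y :: wd) :: l₂)
    (hu : IsTsip u)
    (hueq : u = P ++ C.flatten ++ (y :: q''))
    (hPd : d1 P = 0 ∧ d2 P = 0)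
    (hq : q'' <+: wd) :
    L1 = [] ∧ l₂ = [] := by
  have hCcells : CellsProp C := hcs.of_subset (by rw [hcseq]; intro c hc; simp [hc])
  have hwd : IsTsip wd := by
    have := (hcs (y :: wd) (by rw [hcseq]; simp)).2
    simpa using this
  set seg := C.map List.headI ++ [y] with hseg
  -- prefix conditions for seg
  have hsegpre : ∀ p, p <+: seg → 0 ≤ d1 p ∧ 0 ≤ d2 p := by
    intro p hp
    rcases prefix_append_singleton hp with hp' | rfl
    · exact seg_prefix_nonneg hCcells hu hPd hueq p hp'
    · have hpre : P ++ (C.flatten ++ [y]) <+: u := by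
        rw [hueq, List.append_assoc]
        refine (List.prefix_append_right_inj P).2 ?_
        refine ⟨q'', ?_⟩
        simp
      have := hu.prefix_le hpre
      rw [d1_append, d2_append, hPd.1, hPd.2, d1_append, d2_append,
        d1_flatten_cells hCcells, d2_flatten_cells hCcells] at this
      rw [d1_append, d2_append]
      omega
  -- balance for seg
  have hq1 := hwd.prefix_le hq
  have hu1 := hu.d1_eq
  have hu2 := hu.d2_eq
  rw [hueq, d1_append, d1_append, d1_cons,
    d1_flatten_cells hCcells] at hu1
  rw [hueq, d2_append, d2_append, d2_cons,
    d2_flatten_cells hCcells] at hu2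
  have hself := hsegpre seg (List.prefix_refl seg)
  rw [hseg, d1_append, d2_append] at hself
  have hseg1 : d1 seg = 0 := by
    rw [hseg, d1_append]
    omega
  have hseg2 : d2 seg = 0 := by
    rw [hseg, d2_append]
    omega
  have hsegtsip : IsTsip seg := isTsip_iff.2 ⟨hseg1, hseg2, hsegpre⟩
  have hseginf : seg <:+: cs.map List.headI := by
    refine ⟨L1.map List.headI, l₂.map List.headI, ?_⟩
    rw [hcseq]
    simp [hseg]
  rcases htsip seg hseginf hsegtsip with h | h
  · exact absurd h (by simp [hseg])
  · have heq : cs.map List.headI = L1.map List.headI ++ (seg ++ l₂.map List.headI) := by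
      rw [hcseq]; simp [hseg]
    rw [← h] at heq
    have hlen := congrArg List.length heq
    simp only [List.length_append, List.length_map] at hlen
    constructor
    · exact List.length_eq_zero_iff.1 (by omega)
    · exact List.length_eq_zero_iff.1 (by omega)

lemma cross_case {cs C L1 : List (List Letter)} {u P u2 : List Letter}
    (hcs : CellsProp cs)
    (hop : IsOpSeq (cs.map List.headI))
    (hpref : ∀ p, p <+: cs.map List.headI → p ≠ [] → p ≠ cs.map List.headI → 0 < dt p)
    (hcseq : cs = L1 ++ C) (hCne : C ≠ [])
    (hu : IsTsip u) (hueq : u = P ++ C.flatten ++ u2)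
    (hPd : d1 P = 0 ∧ d2 P = 0) :
    L1 = [] := by
  by_contra hL1
  have hCcells : CellsProp C := hcs.of_subset (by rw [hcseq]; intro c hc; simp [hc])
  have hnn := seg_prefix_nonneg hCcells hu hPd hueq (C.map List.headI)
    (List.prefix_refl _)
  have hxs : cs.map List.headI = L1.map List.headI ++ C.map List.headI := by
    rw [hcseq]; simp
  have hppre : L1.map List.headI <+: cs.map List.headI := by
    rw [hxs]; exact List.prefix_append _ _
  have hpne : L1.map List.headI ≠ [] := by simpa using hL1
  have hpprop : L1.map List.headI ≠ cs.map List.headI := by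
    intro h
    rw [hxs] at h
    have hl := congrArg List.length h
    simp only [List.length_append, List.length_map] at hl
    have : C.length = 0 := by omega
    exact hCne (List.length_eq_zero_iff.1 this)
  have hpos := hpref _ hppre hpne hpprop
  have h0 := hop.dt_eq
  rw [hxs, dt_append] at h0
  have hlt : dt (C.map List.headI) < 0 := by omega
  rw [dt_eq_d] at hlt
  omega

lemma crux {cs : List (List Letter)} {v u : List Letter}
    (hcs : CellsProp cs)
    (hlast : ∀ l c, cs = l ++ [c] → c.tail = [])
    (hop : IsOpSeq (cs.map List.headI))
    (hpref : ∀ p, p <+: cs.map List.headI → p ≠ [] → p ≠ cs.map List.headI → 0 < dt p)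
    (htsip : ∀ t, t <:+: cs.map List.headI → IsTsip t → t = [] ∨ t = cs.map List.headI)
    (hu : IsTsip u) (hune : u ≠ []) (hinf : u <:+: cs.flatten ++ v) :
    (∃ c ∈ cs, u <:+: c.tail) ∨ u <:+: v ∨ u <+: cs.flatten ++ v := by
  rcases infix_append_cases hinf with hA | hB | ⟨u1, u2, hu12, h1ne, h2ne, hsuf, hpre⟩
  · -- u inside the flatten
    rcases infix_flatten (fun c hc => (hcs c hc).1) hA hune with
      ⟨l₁, c, l₂, hcseq, huc⟩ | ⟨l₁, c, mid, d, l₂, p, q, hcseq, hueq, hp, hpne, hq, hqne⟩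
    · -- inside one cell
      have hcmem : c ∈ cs := by rw [hcseq]; simp
      obtain ⟨x, wc, rfl⟩ := List.exists_cons_of_ne_nil (hcs c hcmem).1
      have hwc : IsTsip wc := by simpa using (hcs _ hcmem).2
      rcases infix_cons_cases huc with ⟨q, rfl, hq⟩ | rfl | huw
      · exact absurd (hwc.prefix_le hq) (by
          intro hle
          exact single_marker hu hle.1 hle.2)
      · exact absurd rfl hune
      · exact Or.inl ⟨x :: wc, hcmem, by simpa using huw⟩
    · -- spanning several cells, within the flatten
      have hdmem : d ∈ cs := by rw [hcseq]; simp
      obtain ⟨y, wd, rfl⟩ := List.exists_cons_of_ne_nil (hcs d hdmem).1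
      rcases prefix_cons_cases hq with rfl | ⟨q'', rfl, hq''⟩
      · exact absurd rfl hqne
      have hcmem : c ∈ cs := by rw [hcseq]; simp
      obtain ⟨x, wc, rfl⟩ := List.exists_cons_of_ne_nil (hcs c hcmem).1
      have hwc : IsTsip wc := by simpa using (hcs _ hcmem).2
      rcases suffix_cons_cases hp with rfl | hpw
      · -- p is the whole cell c
        have hspan := spanning_case (C := (x :: wc) :: mid) (L1 := l₁) (P := [])
          (l₂ := l₂) (y := y) (wd := wd) (q'' := q'')
          hcs htsip (by rw [hcseq]; simp) hu
          (by rw [hueq]; simp) ⟨d1_nil, d2_nil⟩ hq''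
        obtain ⟨hL1, hl2⟩ := hspan
        refine Or.inr (Or.inr ?_)
        obtain ⟨r, hr⟩ := hq''
        refine ⟨r ++ v, ?_⟩
        rw [hueq, hcseq, hL1, hl2]
        simp [← hr]
      · -- p is a proper suffix, inside wc : impossible
        have hPd : d1 p = 0 ∧ d2 p = 0 := by
          refine P_balanced hu ?_ hpw hwc
          rw [hueq, List.append_assoc]
          exact List.prefix_append _ _
        have hspan := spanning_case (C := mid) (L1 := l₁ ++ [x :: wc])
          (l₂ := l₂) (y := y) (wd := wd) (q'' := q'')
          hcs htsip (by rw [hcseq]; simp) hu (by rw [hueq]) hPd hq''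
        simp at hspan
  · exact Or.inr (Or.inl hB)
  · -- u crosses from the flatten into v
    obtain ⟨l₁, c, l₂, p', hcseq, hu1eq, hp', hp'ne⟩ := suffix_flatten hsuf h1ne
    have hcmem : c ∈ cs := by rw [hcseq]; simp
    obtain ⟨x, wc, rfl⟩ := List.exists_cons_of_ne_nil (hcs c hcmem).1
    have hwc : IsTsip wc := by simpa using (hcs _ hcmem).2
    rcases suffix_cons_cases hp' with rfl | hpw
    · -- p' is the whole cell c
      have hL1 := cross_case (C := (x :: wc) :: l₂) (L1 := l₁) (P := []) (u2 := u2)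
        hcs hop hpref (by rw [hcseq]) (by simp) hu
        (by rw [hu12, hu1eq]; simp) ⟨d1_nil, d2_nil⟩
      refine Or.inr (Or.inr ?_)
      obtain ⟨r, hr⟩ := hpre
      refine ⟨r, ?_⟩
      rw [hu12, hu1eq, hcseq, hL1, ← hr]
      simp
    · -- p' is a suffix of wc
      cases l₂ with
      | nil =>
        have := hlast l₁ (x :: wc) hcseq
        simp only [List.tail_cons] at this
        rw [this] at hpw
        have : p' = [] := List.suffix_nil.1 hpw
        exact absurd this hp'ne
      | cons e l₂' =>
        have hPd : d1 p' = 0 ∧ d2 p' = 0 := by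
          refine P_balanced hu ?_ hpw hwc
          rw [hu12, hu1eq, List.append_assoc]
          exact List.prefix_append _ _
        have hL1 := cross_case (C := e :: l₂') (L1 := l₁ ++ [x :: wc]) (u2 := u2)
          hcs hop hpref (by rw [hcseq]; simp) (by simp) hu
          (by rw [hu12, hu1eq]) hPd
        simp at hL1
/-! ### final helpers -/

lemma two_split {α : Type*} {A B : α} {p m q : List α}
    (h : [A, B] = p ++ m ++ q) (hp : p ≠ []) (hq : q ≠ []) :
    p = [A] ∧ m = [] ∧ q = [B] := by
  cases p with
  | nil => exact absurd rfl hp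
  | cons a p' =>
    rw [show (a :: p') ++ m ++ q = a :: (p' ++ m ++ q) from by simp] at h
    injection h with h1 h2
    have hlen := congrArg List.length h2
    have hqlen : 1 ≤ q.length := List.length_pos_iff.2 hq
    simp only [List.length_append, List.length_singleton] at hlen
    have hp' : p' = [] := List.length_eq_zero_iff.1 (by omega)
    have hm : m = [] := List.length_eq_zero_iff.1 (by omega)
    subst hp'
    subst hm
    simp only [List.nil_append] at h2
    exact ⟨by rw [h1], rfl, h2.symm⟩

lemma get?_len {α : Type*} (L : List α) (a : α) (R : List α) :
    (L ++ a :: R)[L.length]? = some a := by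
  induction L with
  | nil => rfl
  | cons x L ih => simpa using ih

lemma middle_pos {wi r' s : List Letter} {x : Letter} (hts : IsTsip wi)
    (hstd : Standard wi) (heq : wi = r' ++ x :: s) (hx : x = I2 ∨ x = O2) :
    1 ≤ dt r' := by
  have hpr : r' <+: wi := ⟨x :: s, heq.symm⟩
  have h0 := hts.prefix_le hpr
  rcases hx with rfl | rfl
  · -- x = I2 : if r' were balanced, x :: s would be a tsip sub-word starting with I2
    by_contra hcon
    push_neg at hcon
    rw [dt_eq_d] at hcon
    have h1 : d1 r' = 0 := by omega
    have h2 : d2 r' = 0 := by omega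
    have hts2 : IsTsip (I2 :: s) := (heq ▸ hts).drop_balanced h1 h2
    have := hstd (I2 :: s) ⟨r', [], by rw [heq]; simp⟩ hts2 (by simp)
    simp at this
  · -- x = O2
    have hpr2 : r' ++ [O2] <+: wi := ⟨s, by rw [heq]; simp⟩
    have h1 := hts.prefix_le hpr2
    rw [d2_append] at h1
    have : d2 [O2] = -1 := by simp [d2_single]
    rw [dt_eq_d]
    omega
lemma get?_len_map {α β : Type*} (f : α → β) (L : List α) (a : β) (R : List β) :
    ((L.map f) ++ a :: R)[L.length]? = some a := by
  rw [show L.length = (L.map f).length from (List.length_map (as := L) f).symm]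
  exact get?_len _ _ _

lemma get?_len_map1 {α β : Type*} (f : α → β) (L : List α) (a b : β) (R : List β) :
    ((L.map f) ++ a :: b :: R)[L.length + 1]? = some b := by
  rw [show (L.map f) ++ a :: b :: R = ((L.map f) ++ [a]) ++ b :: R from by simp,
    show L.length + 1 = ((L.map f) ++ [a]).length from by simp]
  exact get?_len _ _ _

/-- A non-empty operation sequence `w` with decomposition
`w = x₁w₁⋯w_{2m-1}x_{2m}v` is canonical if and only if: (i) `x₁x₂⋯x_{2m}` is top happy;
(ii) each `wᵢ` is a standard tsip word that outputs eagerly; (iii) `v` is canonical;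
(iv) whenever `xᵢxᵢ₊₁` equals `I₁O₂` or `I₂O₁`, the word `wᵢ` is non-empty. -/
theorem stmt_10 (w : List Letter) (xs : List Letter) (ws : List (List Letter))
    (v : List Letter) (hne : w ≠ []) (hd : IsDecomp w xs ws v) :
    Canonical w ↔
      TopHappy xs ∧
        (∀ wi ∈ ws, Standard wi ∧ OutputsEagerly wi) ∧
        Canonical v ∧
        ∀ i : ℕ, ∀ a b : Letter, xs[i]? = some a → xs[i + 1]? = some b →
          ((a = Letter.I1 ∧ b = Letter.O2) ∨ (a = Letter.I2 ∧ b = Letter.O1)) →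
          ∀ wi : List Letter, ws[i]? = some wi → wi ≠ [] := by
  obtain ⟨⟨m, hm0, hmlen⟩, hlen, hunb, hws, hvop, hweq⟩ := hd
  obtain ⟨hxop, hxne, hxtsip, hxprefix⟩ := hunb
  set cells := List.zipWith (fun x wi => x :: wi) xs (ws ++ [[]]) with hcells
  have hlen' : xs.length = (ws ++ [[]]).length := by simp [hlen]
  have hmaph : cells.map List.headI = xs := zip_map_headI hlen'
  have hmapt : cells.map List.tail = ws ++ [[]] := zip_map_tail hlen'
  have hcellsP : CellsProp cells := zip_cellsProp (fun wq hw => by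
    rcases List.mem_append.1 hw with h | h
    · exact hws wq h
    · simp at h; rw [h]; exact isTsip_nil)
  have hcellsne : ∀ c ∈ cells, c ≠ [] := fun c hc => (hcellsP c hc).1
  have htailmem : ∀ c ∈ cells, c.tail ∈ ws ++ [[]] := by
    intro c hc
    rw [← hmapt]
    exact List.mem_map_of_mem (f := List.tail) hc
  have hlast : ∀ l c, cells = l ++ [c] → c.tail = [] := by
    intro l c h
    have h2 : (l.map List.tail) ++ [c.tail] = ws ++ [[]] := by
      rw [← hmapt, h]; simp
    have h3 := (List.append_inj' h2 (by simp)).2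
    simpa using h3
  have hpref : ∀ p, p <+: xs → p ≠ [] → p ≠ xs → 0 < dt p := by
    intro p hp hpne hpx
    have hops : ¬IsOpSeq p := by
      intro h
      rcases hxprefix p hp h with h' | h'
      exacts [hpne h', hpx h']
    have hnn : ∀ r, r <+: p → 0 ≤ dt r := fun r hr => hxop.prefix_le (hr.trans hp)
    have h0 : 0 ≤ dt p := hnn p (List.prefix_refl p)
    rcases eq_or_lt_of_le h0 with h' | h'
    · exact absurd (isOpSeq_iff.2 ⟨h'.symm, hnn⟩) hops
    · exact h'
  have hblock : dt cells.flatten = 0 := by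
    rw [dt_flatten_cells hcellsP, hmaph, hxop.dt_eq]
  obtain ⟨x1, xr, hxs1⟩ := List.exists_cons_of_ne_nil hxne
  have hwhead : w.head? = some x1 := by
    obtain ⟨w1, wr, hws1⟩ : ∃ w1 wr, ws ++ [[]] = w1 :: wr := by
      cases h : ws ++ [[]] with
      | nil => simp at h
      | cons a b => exact ⟨a, b, rfl⟩
    rw [hweq, hcells, hxs1, hws1]
    simp
  constructor
  · rintro ⟨hCe, hCs, hCt⟩
    refine ⟨?_, ?_, ⟨?_, ?_, ?_⟩, ?_⟩
    · -- (i) TopHappy xs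
      intro a b x hsplit hx
      have hal : a.length < xs.length := by rw [hsplit]; simp
      have hal' : a.length < (ws ++ [[]]).length := by omega
      have htd := List.take_append_drop a.length (ws ++ [[]])
      obtain ⟨wi, rest, hdr⟩ : ∃ wi rest, (ws ++ [[]]).drop a.length = wi :: rest := by
        cases h : (ws ++ [[]]).drop a.length with
        | nil =>
          exfalso
          have := congrArg List.length h
          simp at this
          omega
        | cons a b => exact ⟨a, b, rfl⟩
      have hcellssplit : cells =
          List.zipWith (fun x wi => x :: wi) a ((ws ++ [[]]).take a.length)
          ++ (x :: wi) :: List.zipWith (fun x wi => x :: wi) b rest := by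
        rw [hcells, hsplit]
        conv_lhs => rw [← htd]
        rw [List.zipWith_append (by simp; omega), hdr]
        simp
      have hwsplit : w =
          (List.zipWith (fun x wi => x :: wi) a ((ws ++ [[]]).take a.length)).flatten
          ++ x :: (wi ++ ((List.zipWith (fun x wi => x :: wi) b rest).flatten ++ v)) := by
        rw [hweq, hcellssplit]
        simp
      have h2 := hCt _ _ x hwsplit hx
      have hdta := dt_of_countIO h2
      have hZAcells : CellsProp (List.zipWith (fun x wi => x :: wi) a
          ((ws ++ [[]]).take a.length)) :=
        hcellsP.of_subset (by rw [hcellssplit]; exact fun c hc => List.mem_append.2 (Or.inl hc))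
      rw [dt_flatten_cells hZAcells,
        zip_map_headI (by simp; omega)] at hdta
      exact countIO_of_dt hdta
    · -- (ii) each wi standard and eager
      intro wi hwi
      obtain ⟨s, t, hst⟩ := List.append_of_mem hwi
      have hsl : s.length < xs.length := by rw [hlen, hst]; simp
      obtain ⟨x, xr2, hdr⟩ : ∃ x xr2, xs.drop s.length = x :: xr2 := by
        cases h : xs.drop s.length with
        | nil =>
          exfalso
          have := congrArg List.length h
          simp at this
          omega
        | cons a b => exact ⟨a, b, rfl⟩
      have hsplitx := List.take_append_drop s.length xs
      have hcellssplit : cells =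
          List.zipWith (fun x wi => x :: wi) (xs.take s.length) s
          ++ (x :: wi) :: List.zipWith (fun x wi => x :: wi) xr2 (t ++ [[]]) := by
        rw [hcells]
        conv_lhs => rw [← hsplitx, hst, hdr]
        rw [show (s ++ wi :: t) ++ [[]] = s ++ (wi :: (t ++ [[]])) from by simp]
        rw [List.zipWith_append (by simp; omega)]
        simp
      have hinf : wi <:+: w := by
        refine ⟨(List.zipWith (fun x wi => x :: wi) (xs.take s.length) s).flatten ++ [x],
          (List.zipWith (fun x wi => x :: wi) xr2 (t ++ [[]])).flatten ++ v, ?_⟩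
        rw [hweq, hcellssplit]
        simp
      exact ⟨standard_infix hCs hinf, eager_infix hCe hinf⟩
    · -- (iii) v eager
      exact eager_infix hCe ⟨cells.flatten, [], by rw [hweq]; simp⟩
    · -- (iii) v standard
      exact standard_infix hCs ⟨cells.flatten, [], by rw [hweq]; simp⟩
    · -- (iii) v top happy
      intro a b x hsplit hx
      have h2 := hCt (cells.flatten ++ a) b x (by rw [hweq, hsplit]; simp) hx
      have h3 := dt_of_countIO h2
      rw [dt_append, hblock] at h3
      exact countIO_of_dt (by omega)
    · -- (iv)
      intro i a b hga hgb hbad wi0 hgw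
      intro hwnil
      subst hwnil
      obtain ⟨A1, B1, hA, hAl⟩ := get?_split hga
      rw [hA, List.getElem?_append_right (by omega)] at hgb
      rw [show i + 1 - A1.length = 1 from by omega] at hgb
      obtain ⟨B2, hB⟩ : ∃ B2, B1 = b :: B2 := by
        cases B1 with
        | nil => simp at hgb
        | cons b' B2 =>
          simp at hgb
          exact ⟨B2, by rw [hgb]⟩
      obtain ⟨Wa, Wb, hW, hWl⟩ := get?_split hgw
      obtain ⟨wb, rest, hwb⟩ : ∃ wb rest, Wb ++ [[]] = wb :: rest := by
        cases h : Wb ++ [[]] with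
        | nil => simp at h
        | cons a b => exact ⟨a, b, rfl⟩
      have hcellssplit : cells =
          List.zipWith (fun x wi => x :: wi) A1 Wa
          ++ [a] :: (b :: wb) :: List.zipWith (fun x wi => x :: wi) B2 rest := by
        rw [hcells, hA, hB, hW]
        rw [show (Wa ++ [] :: Wb) ++ [[]] = Wa ++ ([] :: (Wb ++ [[]])) from by simp]
        rw [List.zipWith_append (by omega), hwb]
        simp
      have hinf : [a, b] <:+: w := by
        refine ⟨(List.zipWith (fun x wi => x :: wi) A1 Wa).flatten,
          wb ++ ((List.zipWith (fun x wi => x :: wi) B2 rest).flatten ++ v), ?_⟩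
        rw [hweq, hcellssplit]
        simp
      rcases hbad with ⟨rfl, rfl⟩ | ⟨rfl, rfl⟩
      exacts [hCe.1 hinf, hCe.2 hinf]
  · rintro ⟨hTH, hWSE, hVC, hIV⟩
    have hx1 : x1 = I1 := by
      have hp1 : [x1] <+: xs := ⟨xr, by rw [hxs1]; rfl⟩
      have h0 := hxop.prefix_le hp1
      have he := dt_single x1
      have hx12 : x1 = I1 ∨ x1 = I2 := by
        cases x1
        · exact Or.inl rfl
        · exact Or.inr rfl
        · exfalso; simp at he; omega
        · exfalso; simp at he; omega
      rcases hx12 with rfl | rfl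
      · rfl
      · have := hTH [] xr I2 (by rw [hxs1]; rfl) (Or.inl rfl)
        simp [countI, countO] at this
    have hop' : IsOpSeq (cells.map List.headI) := by rw [hmaph]; exact hxop
    have hpref' : ∀ p, p <+: cells.map List.headI → p ≠ [] →
        p ≠ cells.map List.headI → 0 < dt p := by rw [hmaph]; exact hpref
    have htsip' : ∀ t, t <:+: cells.map List.headI → IsTsip t →
        t = [] ∨ t = cells.map List.headI := by rw [hmaph]; exact hxtsip
    refine ⟨?_, ?_, ?_⟩
    · -- OutputsEagerly w
      have key : ∀ A B : Letter, ((A = I1 ∧ B = O2) ∨ (A = I2 ∧ B = O1)) →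
          ¬ [A, B] <:+: w := by
        intro A B hAB hbad
        have hAin : A = I1 ∨ A = I2 := by
          rcases hAB with ⟨rfl, _⟩ | ⟨rfl, _⟩
          exacts [Or.inl rfl, Or.inr rfl]
        have hBout : B = O1 ∨ B = O2 := by
          rcases hAB with ⟨_, rfl⟩ | ⟨_, rfl⟩
          exacts [Or.inr rfl, Or.inl rfl]
        have hVeag : ¬ [A, B] <:+: v := by
          rcases hAB with ⟨rfl, rfl⟩ | ⟨rfl, rfl⟩
          exacts [hVC.1.1, hVC.1.2]
        have hwseag : ∀ wi ∈ ws, ¬ [A, B] <:+: wi := by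
          intro wi hm
          rcases hAB with ⟨rfl, rfl⟩ | ⟨rfl, rfl⟩
          exacts [(hWSE wi hm).2.1, (hWSE wi hm).2.2]
        rw [hweq] at hbad
        rcases infix_append_cases hbad with h | h | ⟨u1, u2, hu12, h1, h2h, hsuf, hprefv⟩
        · rcases infix_flatten hcellsne h (by simp) with
            ⟨l₁, c, l₂, hcseq, hin⟩ |
            ⟨l₁, c, mid, dd, l₂, p, q, hcseq, hueq2, hp, hpne, hq, hqne⟩
          · -- inside one cell
            have hcmem : c ∈ cells := by rw [hcseq]; simp
            obtain ⟨xi, wi, rfl⟩ := List.exists_cons_of_ne_nil (hcellsne c hcmem)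
            have hwits : IsTsip wi := by simpa using (hcellsP _ hcmem).2
            rcases infix_cons_cases hin with ⟨q, hABq, hqw⟩ | hnil | hinw
            · injection hABq with hAxi hqB
              rw [← hqB] at hqw
              obtain ⟨tb, htb⟩ := hqw
              have hh := (show IsTsip (B :: tb) from by
                rw [show B :: tb = wi from htb]; exact hwits).head_isI
              rcases hBout with rfl | rfl <;> simp at hh
            · simp at hnil
            · have hwine : wi ≠ [] := by
                intro h'
                rw [h'] at hinw
                simp at hinw
              rcases List.mem_append.1 (htailmem _ hcmem) with hmem | hnil2
              · exact hwseag wi (by simpa using hmem) hinw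
              · simp at hnil2
                exact hwine hnil2
          · -- spanning two cells
            obtain ⟨hpA, hmid, hqB⟩ := two_split hueq2 hpne hqne
            have hmidnil : mid = [] :=
              flatten_eq_nil_cells (fun c' hc' => hcellsne c' (by rw [hcseq]; simp [hc'])) hmid
            subst hmidnil
            have hdmem : dd ∈ cells := by rw [hcseq]; simp
            obtain ⟨xj, wj, rfl⟩ := List.exists_cons_of_ne_nil (hcellsne dd hdmem)
            have hBxj : B = xj := by
              rw [hqB] at hq
              rcases prefix_cons_cases hq with h' | ⟨q', h1', h2'⟩
              · simp at h'
              · injection h1' with h3'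
            have hcmem : c ∈ cells := by rw [hcseq]; simp
            obtain ⟨xi, wi, rfl⟩ := List.exists_cons_of_ne_nil (hcellsne c hcmem)
            have hwits : IsTsip wi := by simpa using (hcellsP _ hcmem).2
            rw [hpA] at hp
            rcases suffix_cons_cases hp with hAc | hAw
            · -- the cell c is [A]
              have hAxi : A = xi := by injection hAc
              have hwinil : wi = [] := by
                injection hAc with i1 i2
                exact i2.symm
              subst hwinil
              have hcseq2 : cells = l₁ ++ (xi :: []) :: (xj :: wj) :: l₂ := by
                rw [hcseq]; simp
              have hgetA : xs[l₁.length]? = some A := by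
                rw [← hmaph, hcseq2]
                rw [show (l₁ ++ (xi :: []) :: (xj :: wj) :: l₂).map List.headI =
                  l₁.map List.headI ++ xi :: xj :: l₂.map List.headI from by simp [List.headI]]
                rw [hAxi]
                exact get?_len_map _ _ _ _
              have hgetB : xs[l₁.length + 1]? = some B := by
                rw [← hmaph, hcseq2]
                rw [show (l₁ ++ (xi :: []) :: (xj :: wj) :: l₂).map List.headI =
                  l₁.map List.headI ++ xi :: xj :: l₂.map List.headI from by simp [List.headI]]
                rw [hBxj]
                exact get?_len_map1 _ _ _ _ _
              have hlcells : l₁.length < ws.length := by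
                have h1 := congrArg List.length hcseq2
                have h2 := congrArg List.length hmapt
                simp at h1 h2
                omega
              have hgetW : ws[l₁.length]? = some [] := by
                have h1 : (ws ++ [[]])[l₁.length]? = some [] := by
                  rw [← hmapt, hcseq2]
                  rw [show (l₁ ++ (xi :: []) :: (xj :: wj) :: l₂).map List.tail =
                    l₁.map List.tail ++ ([] : List Letter) :: wj :: l₂.map List.tail from by simp]
                  exact get?_len_map _ _ _ _
                rw [List.getElem?_append_left hlcells] at h1
                exact h1
              exact absurd rfl (hIV l₁.length A B hgetA hgetB hAB [] hgetW)
            · -- [A] is a suffix of wi : A would be the last letter of a tsip word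
              obtain ⟨wi', hwi'⟩ := hAw
              have hlo := (show IsTsip (wi' ++ [A]) from hwi' ▸ hwits).last_isO
              rcases hAin with rfl | rfl <;> rcases hlo with h' | h' <;> simp at h'
        · exact hVeag h
        · -- crossing from block into v
          obtain ⟨hu1A, _, hu2B⟩ := two_split
            (show [A, B] = u1 ++ [] ++ u2 from by rw [hu12]; simp) h1 h2h
          rw [hu1A] at hsuf
          obtain ⟨l₁, c, l₂, p', hcseq, hu1eq, hp', hp'ne⟩ := suffix_flatten hsuf (by simp)
          have hcmem : c ∈ cells := by rw [hcseq]; simp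
          obtain ⟨xi, wi, rfl⟩ := List.exists_cons_of_ne_nil (hcellsne c hcmem)
          have hwits : IsTsip wi := by simpa using (hcellsP _ hcmem).2
          obtain ⟨hpA, hl₂nil⟩ : p' = [A] ∧ l₂.flatten = [] := by
            cases p' with
            | nil => exact absurd rfl hp'ne
            | cons a0 p'' =>
              injection hu1eq with h1' h2'
              have h3' := (List.append_eq_nil_iff.1 h2'.symm)
              exact ⟨by rw [h1', h3'.1], h3'.2⟩
          have hl₂ : l₂ = [] :=
            flatten_eq_nil_cells (fun c' hc' => hcellsne c' (by rw [hcseq]; simp [hc'])) hl₂nil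
          subst hl₂
          rw [hpA] at hp'
          rcases suffix_cons_cases hp' with hAc | hAw
          · -- c = [A] is the last cell : A is the last letter of xs, an output
            have hAxi : A = xi := by injection hAc
            have hwinil : wi = [] := by
              injection hAc with i1 i2
              exact i2.symm
            subst hwinil
            have hxs2 : xs = l₁.map List.headI ++ [A] := by
              rw [← hmaph, hcseq]
              simp [hAxi]
            have hlo := (show IsOpSeq (l₁.map List.headI ++ [A]) from hxs2 ▸ hxop).last_isO
            rcases hAin with rfl | rfl <;> rcases hlo with h' | h' <;> simp at h'
          · obtain ⟨wi', hwi'⟩ := hAw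
            have hlo := (show IsTsip (wi' ++ [A]) from hwi' ▸ hwits).last_isO
            rcases hAin with rfl | rfl <;> rcases hlo with h' | h' <;> simp at h'
      exact ⟨key I1 O2 (Or.inl ⟨rfl, rfl⟩), key I2 O1 (Or.inr ⟨rfl, rfl⟩)⟩
    · -- Standard w
      intro u hu hts hune
      rw [hweq] at hu
      rcases crux hcellsP hlast hop' hpref' htsip' hts hune hu with
        ⟨c, hcmem, hct⟩ | hv | hpre
      · rcases List.mem_append.1 (htailmem _ hcmem) with hmem | hnil
        · exact (hWSE _ hmem).1 u hct hts hune
        · simp at hnil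
          rw [hnil] at hct
          have : u = [] := by simpa using hct
          exact absurd this hune
      · exact hVC.2.1 u hv hts hune
      · rw [← hweq] at hpre
        rw [head?_of_prefix hpre hune, hwhead, hx1]
    · -- TopHappy w
      intro a b x hsplit hx
      rw [hweq] at hsplit
      rcases List.append_eq_append_iff.1 hsplit with ⟨e, he1, he2⟩ | ⟨e, he1, he2⟩
      · have h2 := hVC.2.2 e b x he2 hx
        apply countIO_of_dt
        rw [he1, dt_append, hblock]
        have := dt_of_countIO h2
        omega
      · cases e with
        | nil =>
          simp only [List.nil_append] at he2
          have h2 := hVC.2.2 [] b x (by rw [← he2]; rfl) hx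
          simp [countI, countO] at h2
        | cons y e' =>
          injection he2 with i1 i2
          subst i2
          subst i1
          obtain ⟨l₁, c, l₂, r, s, hcseq, hcr, haeq⟩ := flatten_eq_append_cons he1
          have hcmem : c ∈ cells := by rw [hcseq]; simp
          obtain ⟨xi, wi, rfl⟩ := List.exists_cons_of_ne_nil (hcellsne c hcmem)
          have hwits : IsTsip wi := by simpa using (hcellsP _ hcmem).2
          have hl₁cells : CellsProp l₁ :=
            hcellsP.of_subset (by rw [hcseq]; intro c' hc'; simp [hc'])
          cases r with
          | nil =>
            injection hcr with i1 i2
            have hxs_split : xs = l₁.map List.headI ++ xi :: l₂.map List.headI := by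
              rw [← hmaph, hcseq]
              simp
            have h2 := hTH _ _ xi hxs_split (by rw [i1]; exact hx)
            apply countIO_of_dt
            rw [haeq]
            simp only [List.append_nil]
            rw [dt_flatten_cells hl₁cells]
            exact dt_of_countIO h2
          | cons x0 r' =>
            injection hcr with i1 i2
            subst i1
            have hwimem : wi ∈ ws := by
              rcases List.mem_append.1 (htailmem _ hcmem) with hmem | hnil2
              · simpa using hmem
              · simp at hnil2
                rw [hnil2] at i2
                simp at i2
            have hl₂ne : l₂ ≠ [] := by
              intro h'
              subst h'
              have := hlast l₁ (xi :: wi) hcseq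
              simp at this
              rw [this] at i2
              simp at i2
            have hxs_split : xs = l₁.map List.headI ++ xi :: l₂.map List.headI := by
              rw [← hmaph, hcseq]
              simp
            have hprefpos : 0 < dt (l₁.map List.headI ++ [xi]) := by
              apply hpref
              · exact ⟨l₂.map List.headI, by rw [hxs_split]; simp⟩
              · simp
              · intro h'
                have h1' := congrArg List.length h'
                have h2' := congrArg List.length hxs_split
                simp at h1' h2'
                have : l₂.length = 0 := by omega
                exact hl₂ne (List.length_eq_zero_iff.1 this)
            have hmid := middle_pos (hws wi hwimem) (hWSE wi hwimem).1 i2 hx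
            apply countIO_of_dt
            rw [haeq, dt_append, dt_flatten_cells hl₁cells, dt_cons]
            rw [dt_append] at hprefpos
            omega
end

section
/- Let D and P be formal power series in t with D(0) = P(0) = 1 satisfying 2D = 2 + t + 2Pt - 2Pt² - t·√(1 - 4P + 4P² - 8P²t + 4P²t² - 4Pt), where √ denotes the formal power-series square root of a series with constant term 1. Then P = (D-1)(D-t-1) / (2t(D - 1 - Dt)). -/
open PowerSeries

/-- Let `D` and `P` be formal power series in `t` over `ℚ` with `D(0) = P(0) = 1` satisfying
`2D = 2 + t + 2Pt - 2Pt² - t·√(1 - 4P + 4P² - 8P²t + 4P²t² - 4Pt)`, where `S` is the formal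
square root (a power series with constant term `1` whose square is the radicand). Then
`P = (D-1)(D-t-1) / (2t(D - 1 - Dt))`, equivalently
`2tP(D - 1 - Dt) = (D-1)(D-t-1)`. -/
theorem stmt_11 (D P S : PowerSeries ℚ)
    (hD0 : constantCoeff D = 1) (hP0 : constantCoeff P = 1)
    (hS0 : constantCoeff S = 1)
    (hS : S ^ 2 = 1 - 4 * P + 4 * P ^ 2 - 8 * P ^ 2 * X + 4 * P ^ 2 * X ^ 2 - 4 * P * X)
    (hEq : 2 * D = 2 + X + 2 * P * X - 2 * P * X ^ 2 - X * S) :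
    P * (2 * X * (D - 1 - D * X)) = (D - 1) * (D - X - 1) := by
  have h4 : (4 : PowerSeries ℚ) * (P * (2 * X * (D - 1 - D * X))) =
      4 * ((D - 1) * (D - X - 1)) := by
    linear_combination (2 + X + 2 * P * X - 2 * P * X ^ 2 - 2 * D + X * S) * hEq - X ^ 2 * hS
  have h4ne : (4 : PowerSeries ℚ) ≠ 0 := by
    intro h
    have := congrArg (constantCoeff (R := ℚ)) h
    rw [map_ofNat] at this; norm_num at this
  exact mul_left_cancel₀ h4ne h4
end

section
/- The number of quarter-plane loops of length 2n (walks with unit steps N,E,S,W starting and ending at the origin, confined to ℕ×ℕ) equals C_n · C_{n+1}, where C_n = (1/(n+1))·binom(2n,n) is the n-th Catalan number. -/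
set_option linter.unusedSectionVars false

/-- The four unit steps: `0 = E = (1,0)`, `1 = W = (-1,0)`, `2 = N = (0,1)`, `3 = S = (0,-1)`. -/
def stepVec : Fin 4 → ℤ × ℤ := ![(1, 0), (-1, 0), (0, 1), (0, -1)]

/-- The endpoint of a walk (as a sum of its steps). -/
def walkSum (l : List (Fin 4)) : ℤ × ℤ := (l.map stepVec).sum

/-- A walk stays in the quarter plane: every partial sum has nonnegative coordinates. -/
def IsQuarterWalk (l : List (Fin 4)) : Prop :=
  ∀ m : ℕ, 0 ≤ (walkSum (l.take m)).1 ∧ 0 ≤ (walkSum (l.take m)).2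

open Finset List

section Generic

variable {σ : Type*} [Fintype σ] {V : Type*} [AddCommGroup V]
  (step : σ → V) (R : V → Prop)

/-- Generalized walk predicate: starting at `v`, every partial position lies in region `R`
and the walk ends at `0`. -/
def QWalk (v : V) (l : List σ) : Prop :=
  (∀ m : ℕ, R (v + ((l.take m).map step).sum)) ∧ v + (l.map step).sum = 0

lemma qwalk_nil {v : V} : QWalk step R v [] ↔ R v ∧ v = 0 := by
  constructor
  · rintro ⟨h1, h2⟩
    refine ⟨by simpa using h1 0, by simpa using h2⟩
  · rintro ⟨h1, h2⟩
    exact ⟨fun m => by simpa using h1, by simpa using h2⟩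

lemma qwalk_cons {v : V} {s : σ} {l : List σ} :
    QWalk step R v (s :: l) ↔ R v ∧ QWalk step R (v + step s) l := by
  constructor
  · rintro ⟨h1, h2⟩
    refine ⟨by simpa using h1 0, fun m => ?_, ?_⟩
    · have := h1 (m + 1)
      simpa [add_assoc] using this
    · simpa [add_assoc] using h2
  · rintro ⟨h0, h1, h2⟩
    refine ⟨fun m => ?_, by simpa [add_assoc] using h2⟩
    match m with
    | 0 => simpa using h0
    | m + 1 => simpa [add_assoc] using h1 m

lemma qwalk_R {v : V} {l : List σ} (h : QWalk step R v l) : R v := by simpa using h.1 0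

/-- Lists of fixed length satisfying a predicate, as functions. -/
def ofFnEquiv (P : List σ → Prop) (N : ℕ) :
    {f : Fin N → σ // P (List.ofFn f)} ≃ {l : List σ // l.length = N ∧ P l} where
  toFun f := ⟨List.ofFn f.1, by simp, f.2⟩
  invFun l := ⟨fun i => l.1.get (Fin.cast l.2.1.symm i), by
    have : List.ofFn (fun i => l.1.get (Fin.cast l.2.1.symm i)) = l.1 := by
      rcases l with ⟨l, hl, hp⟩
      subst hl
      simp [List.ofFn_get]
    rw [this]; exact l.2.2⟩
  left_inv f := by
    ext i
    simp
  right_inv l := by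
    rcases l with ⟨l, hl, hp⟩
    subst hl
    simp [List.ofFn_get]

instance (P : List σ → Prop) (N : ℕ) : Finite {l : List σ // l.length = N ∧ P l} :=
  Finite.of_equiv _ (ofFnEquiv P N)

/-- Peeling off the first step. -/
def consEquiv (P : List σ → Prop) (N : ℕ) :
    {l : List σ // l.length = N + 1 ∧ P l} ≃ Σ s : σ, {l : List σ // l.length = N ∧ P (s :: l)} where
  toFun x :=
    match x with
    | ⟨[], h⟩ => absurd h.1 (by simp)
    | ⟨s :: l, h⟩ => ⟨s, l, by simpa using h.1, h.2⟩
  invFun y := ⟨y.1 :: y.2.1, by simp [y.2.2.1], y.2.2.2⟩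
  left_inv x := by
    rcases x with ⟨_ | ⟨s, l⟩, h⟩
    · exact absurd h.1 (by simp)
    · rfl
  right_inv y := rfl

lemma natCard_sigma {ι : Type*} [Fintype ι] (A : ι → Type*) [∀ i, Finite (A i)] :
    Nat.card (Σ i, A i) = ∑ i, Nat.card (A i) := by
  letI : ∀ i, Fintype (A i) := fun i => Fintype.ofFinite _
  simp [Nat.card_eq_fintype_card, Fintype.card_sigma]

lemma card_walk_succ (v : V) (hv : R v) (N : ℕ) :
    Nat.card {l : List σ // l.length = N + 1 ∧ QWalk step R v l}
      = ∑ s : σ, Nat.card {l : List σ // l.length = N ∧ QWalk step R (v + step s) l} := by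
  rw [Nat.card_congr (consEquiv (QWalk step R v) N), natCard_sigma]
  refine Finset.sum_congr rfl fun s _ => ?_
  exact Nat.card_congr (Equiv.subtypeEquivRight fun l => by
    rw [and_congr_right_iff]
    intro _
    rw [qwalk_cons step R, and_iff_right hv])

lemma card_walk_succ_notR (v : V) (hv : ¬ R v) (N : ℕ) :
    Nat.card {l : List σ // l.length = N + 1 ∧ QWalk step R v l} = 0 := by
  have : IsEmpty {l : List σ // l.length = N + 1 ∧ QWalk step R v l} :=
    ⟨fun x => hv (qwalk_R step R x.2.2)⟩
  simp

lemma card_walk_nil_pos (v : V) (hv : R v ∧ v = 0) :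
    Nat.card {l : List σ // l.length = 0 ∧ QWalk step R v l} = 1 := by
  have : Unique {l : List σ // l.length = 0 ∧ QWalk step R v l} :=
    { default := ⟨[], rfl, (qwalk_nil step R).2 hv⟩
      uniq := fun x => by
        rcases x with ⟨l, hl, _⟩
        exact Subtype.ext (List.length_eq_zero_iff.mp hl) }
  exact Nat.card_unique

lemma card_walk_nil_neg (v : V) (hv : ¬ (R v ∧ v = 0)) :
    Nat.card {l : List σ // l.length = 0 ∧ QWalk step R v l} = 0 := by
  have : IsEmpty {l : List σ // l.length = 0 ∧ QWalk step R v l} := by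
    refine ⟨fun x => ?_⟩
    rcases x with ⟨l, hl, hq⟩
    rw [List.length_eq_zero_iff.mp hl] at hq
    exact hv ((qwalk_nil step R).1 hq)
  exact Nat.card_of_isEmpty

end Generic

/-- Quarter-plane walk counts: `Wc N x y` = number of length-`N` nonneg-confined walks
from `(x,y)` to the origin. -/
def Wc : ℕ → ℤ → ℤ → ℕ
  | 0, x, y => if x = 0 ∧ y = 0 then 1 else 0
  | (N+1), x, y => if 0 ≤ x ∧ 0 ≤ y then
      Wc N (x+1) y + Wc N (x-1) y + Wc N x (y+1) + Wc N x (y-1) else 0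

/-- Ballot counts: `Bc k x` = number of length-`k` nonneg ±1 walks from `x` to `0`. -/
def Bc : ℕ → ℤ → ℕ
  | 0, x => if x = 0 then 1 else 0
  | (k+1), x => if 0 ≤ x then Bc k (x+1) + Bc k (x-1) else 0

def Rxy : ℤ × ℤ → Prop := fun v => 0 ≤ v.1 ∧ 0 ≤ v.2

def bstep : Bool → ℤ := fun b => if b then 1 else -1

lemma card_W : ∀ (N : ℕ) (v : ℤ × ℤ),
    Nat.card {l : List (Fin 4) // l.length = N ∧ QWalk stepVec Rxy v l} = Wc N v.1 v.2 := by
  intro N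
  induction N with
  | zero =>
    intro v
    by_cases h : v.1 = 0 ∧ v.2 = 0
    · rw [card_walk_nil_pos stepVec Rxy v
        ⟨⟨le_of_eq h.1.symm, le_of_eq h.2.symm⟩, Prod.ext h.1 h.2⟩]
      simp [Wc, h]
    · rw [card_walk_nil_neg stepVec Rxy v (by
        rw [Prod.ext_iff]; tauto)]
      simp [Wc, h]
  | succ N ih =>
    intro v
    by_cases h : Rxy v
    · rw [card_walk_succ stepVec Rxy v h N, Fin.sum_univ_four]
      simp only [ih]
      have e0 : v + stepVec 0 = (v.1 + 1, v.2) := by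
        simp [stepVec, Prod.ext_iff]
      have e1 : v + stepVec 1 = (v.1 - 1, v.2) := by
        simp [stepVec, Prod.ext_iff]; ring
      have e2 : v + stepVec 2 = (v.1, v.2 + 1) := by
        simp [stepVec, Prod.ext_iff]
      have e3 : v + stepVec 3 = (v.1, v.2 - 1) := by
        simp [stepVec, Prod.ext_iff]; ring
      simp only [e0, e1, e2, e3, Wc]
      simp only [Rxy] at h
      rw [if_pos h]
    · rw [card_walk_succ_notR stepVec Rxy v h N]
      simp only [Wc]
      rw [if_neg (by simpa [Rxy] using h)]

lemma card_B : ∀ (k : ℕ) (x : ℤ),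
    Nat.card {l : List Bool // l.length = k ∧ QWalk bstep (0 ≤ ·) x l} = Bc k x := by
  intro k
  induction k with
  | zero =>
    intro x
    by_cases h : x = 0
    · rw [card_walk_nil_pos bstep (0 ≤ ·) x ⟨le_of_eq h.symm, h⟩]
      simp [Bc, h]
    · rw [card_walk_nil_neg bstep (0 ≤ ·) x (by tauto)]
      simp [Bc, h]
  | succ k ih =>
    intro x
    by_cases h : 0 ≤ x
    · rw [card_walk_succ bstep (0 ≤ ·) x h k, Fintype.sum_bool]
      simp only [ih]
      simp only [Bc]
      rw [if_pos h]
      simp [bstep, sub_eq_add_neg]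
    · rw [card_walk_succ_notR bstep (0 ≤ ·) x h k]
      simp only [Bc]
      rw [if_neg h]

lemma Bc_neg {k : ℕ} {x : ℤ} (hx : x < 0) : Bc k x = 0 := by
  cases k with
  | zero => simp only [Bc]; rw [if_neg (by omega)]
  | succ k => simp only [Bc]; rw [if_neg (by omega)]

lemma Bc_parity : ∀ (k : ℕ) (x : ℤ), ¬ (((k : ℤ) + x) % 2 = 0) → Bc k x = 0 := by
  intro k
  induction k with
  | zero =>
    intro x h
    simp only [Bc]
    rw [if_neg (by omega)]
  | succ k ih =>
    intro x h
    simp only [Bc]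
    split
    · rw [ih (x + 1) (by push_cast at h ⊢; omega), ih (x - 1) (by push_cast at h ⊢; omega)]
    · rfl
lemma W_eq : ∀ (N : ℕ) (x y : ℤ),
    Wc N x y = ∑ j ∈ Finset.range (N + 1), N.choose j * Bc j x * Bc (N - j) y := by
  intro N
  induction N with
  | zero =>
    intro x y
    simp only [Wc, Bc, Finset.range_one, Finset.sum_singleton, Nat.choose_self]
    by_cases hx : x = 0 <;> by_cases hy : y = 0 <;> simp [Bc, hx, hy]
  | succ N ih =>
    intro x y
    by_cases h : 0 ≤ x ∧ 0 ≤ y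
    · have lhs : Wc (N + 1) x y
          = Wc N (x+1) y + Wc N (x-1) y + Wc N x (y+1) + Wc N x (y-1) := by
        simp only [Wc]; rw [if_pos h]
      rw [lhs, ih, ih, ih, ih]
      have hx : ∀ j : ℕ, Bc j (x+1) + Bc j (x-1) = Bc (j+1) x := fun j => by
        simp only [Bc]; rw [if_pos h.1]
      have hy : ∀ j : ℕ, Bc j (y+1) + Bc j (y-1) = Bc (j+1) y := fun j => by
        simp only [Bc]; rw [if_pos h.2]
      -- combine the four sums into two
      have comb1 :
          (∑ j ∈ Finset.range (N + 1), N.choose j * Bc j (x+1) * Bc (N - j) y)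
            + ∑ j ∈ Finset.range (N + 1), N.choose j * Bc j (x-1) * Bc (N - j) y
          = ∑ j ∈ Finset.range (N + 1), N.choose j * Bc (j+1) x * Bc (N - j) y := by
        rw [← Finset.sum_add_distrib]
        refine Finset.sum_congr rfl fun j _ => ?_
        rw [← hx j]; ring
      have comb2 :
          (∑ j ∈ Finset.range (N + 1), N.choose j * Bc j x * Bc (N - j) (y+1))
            + ∑ j ∈ Finset.range (N + 1), N.choose j * Bc j x * Bc (N - j) (y-1)
          = ∑ j ∈ Finset.range (N + 1), N.choose j * Bc j x * Bc (N - j + 1) y := by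
        rw [← Finset.sum_add_distrib]
        refine Finset.sum_congr rfl fun j _ => ?_
        rw [← hy (N - j)]; ring
      have rearr :
          (∑ j ∈ Finset.range (N + 1), N.choose j * Bc j (x+1) * Bc (N - j) y)
            + (∑ j ∈ Finset.range (N + 1), N.choose j * Bc j (x-1) * Bc (N - j) y)
            + (∑ j ∈ Finset.range (N + 1), N.choose j * Bc j x * Bc (N - j) (y+1))
            + ∑ j ∈ Finset.range (N + 1), N.choose j * Bc j x * Bc (N - j) (y-1)
          = (∑ j ∈ Finset.range (N + 1), N.choose j * Bc (j+1) x * Bc (N - j) y)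
            + ∑ j ∈ Finset.range (N + 1), N.choose j * Bc j x * Bc (N - j + 1) y := by
        rw [← comb1, ← comb2]; ring
      rw [rearr]
      -- now the Pascal step
      rw [Finset.sum_range_succ' (fun j => (N+1).choose j * Bc j x * Bc (N + 1 - j) y) (N + 1)]
      simp only [Nat.choose_succ_succ]
      have split :
          ∑ j ∈ Finset.range (N + 1),
              (N.choose j + N.choose (j+1)) * Bc (j+1) x * Bc (N + 1 - (j+1)) y
          = (∑ j ∈ Finset.range (N + 1), N.choose j * Bc (j+1) x * Bc (N - j) y)
            + ∑ j ∈ Finset.range (N + 1), N.choose (j+1) * Bc (j+1) x * Bc (N - j) y := by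
        rw [← Finset.sum_add_distrib]
        refine Finset.sum_congr rfl fun j _ => ?_
        have : N + 1 - (j + 1) = N - j := by omega
        rw [this]; ring
      rw [split]
      have tail :
          (∑ j ∈ Finset.range (N + 1), N.choose (j+1) * Bc (j+1) x * Bc (N - j) y)
            + (N+1).choose 0 * Bc 0 x * Bc (N + 1 - 0) y
          = ∑ j ∈ Finset.range (N + 1), N.choose j * Bc j x * Bc (N - j + 1) y := by
        have expand := Finset.sum_range_succ'
          (fun j => N.choose j * Bc j x * Bc (N + 1 - j) y) (N + 1)
        have drop : ∑ j ∈ Finset.range (N + 1 + 1), N.choose j * Bc j x * Bc (N + 1 - j) y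
            = ∑ j ∈ Finset.range (N + 1), N.choose j * Bc j x * Bc (N + 1 - j) y := by
          rw [Finset.sum_range_succ, Nat.choose_succ_self, zero_mul, zero_mul, add_zero]
        rw [drop] at expand
        calc (∑ j ∈ Finset.range (N + 1), N.choose (j+1) * Bc (j+1) x * Bc (N - j) y)
              + (N+1).choose 0 * Bc 0 x * Bc (N + 1 - 0) y
            = (∑ j ∈ Finset.range (N + 1), N.choose (j+1) * Bc (j+1) x * Bc (N + 1 - (j+1)) y)
              + N.choose 0 * Bc 0 x * Bc (N + 1 - 0) y := by
              congr 1
              · refine Finset.sum_congr rfl fun j _ => ?_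
                have : N + 1 - (j + 1) = N - j := by omega
                rw [this]
              · simp
          _ = ∑ j ∈ Finset.range (N + 1), N.choose j * Bc j x * Bc (N + 1 - j) y := expand.symm
          _ = ∑ j ∈ Finset.range (N + 1), N.choose j * Bc j x * Bc (N - j + 1) y := by
              refine Finset.sum_congr rfl fun j hj => ?_
              have : N + 1 - j = N - j + 1 := by
                have := Finset.mem_range.mp hj; omega
              rw [this]
      omega
    · have lhs : Wc (N + 1) x y = 0 := by
        simp only [Wc]; rw [if_neg h]
      rw [lhs]
      symm
      refine Finset.sum_eq_zero fun j _ => ?_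
      rcases not_and_or.mp h with h1 | h1
      · rw [Bc_neg (by omega)]; ring
      · rw [Bc_neg (x := y) (by omega)]; ring
open DyckStep in
def dsOfBool : Bool → DyckStep := fun b => bif b then U else D

open DyckStep in
def dsToBool : DyckStep → Bool := fun s => match s with | U => true | D => false

lemma ofBool_injective : Function.Injective dsOfBool := by
  intro a b h; cases a <;> cases b <;> simp_all [dsOfBool]
lemma toBool_injective : Function.Injective dsToBool := by
  intro a b h; cases a <;> cases b <;> simp_all [dsToBool]
lemma toBool_ofBool : dsToBool ∘ dsOfBool = id := by funext b; cases b <;> rfl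
lemma ofBool_toBool : dsOfBool ∘ dsToBool = id := by funext s; cases s <;> rfl

lemma bsum_eq (l : List Bool) :
    (l.map bstep).sum = (l.count true : ℤ) - l.count false := by
  induction l with
  | nil => simp
  | cons b t ih =>
    cases b <;> simp [ih, bstep, List.count_cons] <;> push_cast <;> ring

lemma count_tf (l : List Bool) : l.count true + l.count false = l.length := by
  induction l with
  | nil => simp
  | cons b t ih => cases b <;> simp [List.count_cons] <;> omega

lemma qwalk_bool_iff (l : List Bool) :
    QWalk bstep (0 ≤ ·) 0 l ↔
      (∀ m : ℕ, (l.take m).count false ≤ (l.take m).count true)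
        ∧ l.count true = l.count false := by
  unfold QWalk
  simp only [zero_add, bsum_eq]
  constructor
  · rintro ⟨h1, h2⟩
    refine ⟨fun m => ?_, ?_⟩
    · have := h1 m; omega
    · omega
  · rintro ⟨h1, h2⟩
    refine ⟨fun m => ?_, by omega⟩
    have := h1 m
    omega

open DyckStep in
def dyckEquiv (k : ℕ) :
    {l : List Bool // l.length = 2 * k ∧ QWalk bstep (0 ≤ ·) 0 l}
      ≃ {p : DyckWord // p.semilength = k} where
  toFun x := by
    obtain ⟨l, hl, hq⟩ := x
    rw [qwalk_bool_iff] at hq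
    refine ⟨⟨l.map dsOfBool, ?_, ?_⟩, ?_⟩
    · have hU : (l.map dsOfBool).count U = l.count true :=
        List.count_map_of_injective l dsOfBool ofBool_injective true
      have hD : (l.map dsOfBool).count D = l.count false :=
        List.count_map_of_injective l dsOfBool ofBool_injective false
      rw [hU, hD, hq.2]
    · intro i
      rw [← List.map_take]
      have hU : ((l.take i).map dsOfBool).count U = (l.take i).count true :=
        List.count_map_of_injective _ dsOfBool ofBool_injective true
      have hD : ((l.take i).map dsOfBool).count D = (l.take i).count false :=
        List.count_map_of_injective _ dsOfBool ofBool_injective false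
      rw [hU, hD]
      exact hq.1 i
    · show (l.map dsOfBool).count U = k
      have hU : (l.map dsOfBool).count U = l.count true :=
        List.count_map_of_injective l dsOfBool ofBool_injective true
      have := count_tf l
      rw [hU]
      omega
  invFun x := by
    obtain ⟨p, hp⟩ := x
    refine ⟨p.toList.map dsToBool, ?_, ?_⟩
    · rw [List.length_map, ← p.two_mul_semilength_eq_length, hp]
    · rw [qwalk_bool_iff]
      have hT : ∀ L : List DyckStep, (L.map dsToBool).count true = L.count U :=
        fun L => List.count_map_of_injective L dsToBool toBool_injective U
      have hF : ∀ L : List DyckStep, (L.map dsToBool).count false = L.count D :=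
        fun L => List.count_map_of_injective L dsToBool toBool_injective D
      refine ⟨fun m => ?_, ?_⟩
      · rw [← List.map_take, hT, hF]
        exact p.count_D_le_count_U m
      · rw [hT, hF]
        exact p.count_U_eq_count_D
  left_inv x := by
    obtain ⟨l, hl, hq⟩ := x
    apply Subtype.ext
    show (l.map dsOfBool).map dsToBool = l
    rw [List.map_map, toBool_ofBool, List.map_id]
  right_inv x := by
    obtain ⟨p, hp⟩ := x
    apply Subtype.ext
    apply DyckWord.ext
    show (p.toList.map dsToBool).map dsOfBool = p.toList
    rw [List.map_map, ofBool_toBool, List.map_id]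

lemma Bc_two_mul (k : ℕ) : Bc (2 * k) 0 = catalan k := by
  rw [← card_B (2 * k) 0, Nat.card_congr (dyckEquiv k),
    Nat.card_eq_fintype_card, DyckWord.card_dyckWord_semilength_eq_catalan]
open scoped Nat
lemma catalan_cast (m : ℕ) : (catalan m : ℚ) = (2*m) ! / (m ! * (m+1) !) := by
  have h := succ_mul_catalan_eq_centralBinom m
  rw [Nat.centralBinom_eq_two_mul_choose] at h
  have hc : ((2*m).choose m : ℚ) = (2*m) ! / (m ! * m !) := by
    rw [Nat.cast_choose ℚ (by omega : m ≤ 2*m), show 2*m - m = m from by omega]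
  have hq : ((m : ℚ) + 1) * catalan m = (2*m) ! / (m ! * m !) := by
    rw [← hc]
    exact_mod_cast congrArg (Nat.cast (R := ℚ)) h
  have hfact : ((m + 1) ! : ℚ) = (m + 1) * m ! := by
    rw [Nat.factorial_succ]; push_cast; ring
  rw [hfact]
  have h1 : (m ! : ℚ) ≠ 0 := Nat.cast_ne_zero.mpr (Nat.factorial_ne_zero m)
  have h2 : ((m : ℚ) + 1) ≠ 0 := by positivity
  field_simp at hq ⊢
  linarith [hq]

lemma termwise (n k : ℕ) (hk : k ≤ n) :
    n ! * (n+2) ! * ((2*n).choose (2*k) * (catalan k * catalan (n - k)))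
      = (2*n) ! * (n.choose k * (n+2).choose (k+1)) := by
  obtain ⟨j, rfl⟩ := Nat.exists_eq_add_of_le hk
  have hsub : k + j - k = j := by omega
  apply Nat.cast_injective (R := ℚ)
  push_cast
  rw [hsub, catalan_cast, catalan_cast,
    Nat.cast_choose ℚ (by omega : 2*k ≤ 2*(k+j)),
    Nat.cast_choose ℚ (by omega : k ≤ k+j),
    Nat.cast_choose ℚ (by omega : k+1 ≤ k+j+2)]
  have e1 : 2*(k+j) - 2*k = 2*j := by omega
  have e2 : k + j - k = j := by omega
  have e3 : k + j + 2 - (k+1) = j + 1 := by omega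
  rw [e1, e2, e3]
  have ne : ∀ m : ℕ, ((m ! : ℚ)) ≠ 0 := fun m => Nat.cast_ne_zero.mpr (Nat.factorial_ne_zero m)
  field_simp
lemma vdm (n : ℕ) :
    ∑ k ∈ Finset.range (n+1), n.choose k * (n+2).choose (k+1) = (2*n+2).choose (n+1) := by
  have h := Nat.add_choose_eq n (n+2) (n+1)
  rw [Finset.Nat.sum_antidiagonal_eq_sum_range_succ_mk] at h
  have h2 : (2*n+2).choose (n+1)
      = ∑ k ∈ Finset.range (n+2), n.choose k * (n+2).choose (n+1-k) := by
    rw [show 2*n+2 = n+(n+2) from by omega, h]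
  rw [h2, Finset.sum_range_succ (fun k => n.choose k * (n+2).choose (n+1-k)) (n+1),
    Nat.choose_succ_self, zero_mul, add_zero, ← Finset.sum_range_reflect]
  refine Finset.sum_congr rfl fun k hk => ?_
  have hk' : k ≤ n := by have := Finset.mem_range.mp hk; omega
  rw [show n + 1 - 1 - k = n - k from by omega, Nat.choose_symm hk',
    show n - k + 1 = n + 1 - k from by omega]

lemma partB (n : ℕ) :
    ∑ k ∈ Finset.range (n+1), (2*n).choose (2*k) * (catalan k * catalan (n-k))
      = catalan n * catalan (n+1) := by
  have hM : 0 < n ! * (n+2) ! := Nat.mul_pos n.factorial_pos (n+2).factorial_pos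
  apply Nat.eq_of_mul_eq_mul_left hM
  rw [Finset.mul_sum]
  have step1 : ∑ k ∈ Finset.range (n+1),
        n ! * (n+2) ! * ((2*n).choose (2*k) * (catalan k * catalan (n-k)))
      = ∑ k ∈ Finset.range (n+1), (2*n) ! * (n.choose k * (n+2).choose (k+1)) :=
    Finset.sum_congr rfl fun k hk =>
      termwise n k (by have := Finset.mem_range.mp hk; omega)
  rw [step1, ← Finset.mul_sum, vdm]
  apply Nat.cast_injective (R := ℚ)
  push_cast
  rw [catalan_cast, catalan_cast, Nat.cast_choose ℚ (by omega : n+1 ≤ 2*n+2),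
    show 2*n+2 - (n+1) = n+1 from by omega,
    show 2*(n+1) = 2*n+2 from by ring]
  have ne : ∀ m : ℕ, ((m ! : ℚ)) ≠ 0 := fun m => Nat.cast_ne_zero.mpr (Nat.factorial_ne_zero m)
  field_simp

lemma sum_even_vanish (t : ℕ → ℕ) (h : ∀ j, j % 2 = 1 → t j = 0) (m : ℕ) :
    ∑ j ∈ Finset.range (2*m+1), t j = ∑ k ∈ Finset.range (m+1), t (2*k) := by
  induction m with
  | zero => simp
  | succ m ih =>
    rw [show 2*(m+1)+1 = (2*m+1)+1+1 from by ring, Finset.sum_range_succ,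
      Finset.sum_range_succ, ih, h (2*m+1) (by omega),
      Finset.sum_range_succ (fun k => t (2*k)) (m+1)]
    rw [show 2*m+1+1 = 2*(m+1) from by ring]
    omega
/-- The number of quarter-plane loops of length `2n` (walks with unit steps N, E, S, W
starting and ending at the origin, confined to `ℕ × ℕ`) equals `C_n · C_{n+1}`, the
product of consecutive Catalan numbers. -/
theorem stmt_19 (n : ℕ) :
    Nat.card {f : Fin (2 * n) → Fin 4 //
        IsQuarterWalk (List.ofFn f) ∧ walkSum (List.ofFn f) = (0, 0)} =
      catalan n * catalan (n + 1) := by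
  have e1 : Nat.card {f : Fin (2 * n) → Fin 4 //
        IsQuarterWalk (List.ofFn f) ∧ walkSum (List.ofFn f) = (0, 0)}
      = Nat.card {l : List (Fin 4) // l.length = 2 * n ∧ QWalk stepVec Rxy 0 l} := by
    apply Nat.card_congr
    refine (Equiv.subtypeEquivRight fun f => ?_).trans
      (ofFnEquiv (QWalk stepVec Rxy 0) (2 * n))
    simp [QWalk, IsQuarterWalk, walkSum, Rxy, Prod.ext_iff]
  rw [e1, show (0 : ℤ × ℤ) = ((0 : ℤ), (0 : ℤ)) from rfl, card_W (2 * n) (0, 0)]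
  rw [W_eq (2 * n) 0 0]
  rw [sum_even_vanish (fun j => (2*n).choose j * Bc j 0 * Bc (2*n - j) 0)
    (fun j hj => by
      show (2*n).choose j * Bc j 0 * Bc (2*n - j) 0 = 0
      rw [Bc_parity j 0 (by omega)]
      ring) n]
  rw [← partB n]
  refine Finset.sum_congr rfl fun k hk => ?_
  have hk' : k ≤ n := by have := Finset.mem_range.mp hk; omega
  rw [show 2*n - 2*k = 2*(n-k) from by omega, Bc_two_mul, Bc_two_mul]
  ring
end
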